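/- For all n ≥ 1, the generating polynomial of exc_A over G_{r,n} satisfies D_{r,n}(t) = r · Σ_{j=1}^{n} j! · S(n,j) · (t+r−1)^{j−1} · (1−t)^{n−j}, where S(n,j) are the Stirling numbers of the second kind. -/

import Mathlib

open Finset Polynomial

/-- The group of colored permutations `G_{r,n} = Z_r ≀ S_n`, realized as bijections of the
colored alphabet `Σ = [n] × {0,…,r-1}` commuting with the color shift. -/
def ColoredPerm (r n : ℕ) [NeZero r] : Type :=
  {π : Equiv.Perm (Fin n × Fin r) //
    ∀ x : Fin n × Fin r, π (x.1, x.2 + 1) = ((π x).1, (π x).2 + 1)}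

/-- The color order on the colored alphabet:
`1^[r-1] < ⋯ < n^[r-1] < ⋯ < 1^[0] < ⋯ < n^[0]` (higher color is smaller). -/
def colorLt {r n : ℕ} (x y : Fin n × Fin r) : Prop :=
  y.2 < x.2 ∨ (x.2 = y.2 ∧ x.1 < y.1)

/-- The excedance number `exc` of a colored permutation. -/
noncomputable def cExc {r n : ℕ} [NeZero r] (π : ColoredPerm r n) : ℕ :=
  Nat.card {x : Fin n × Fin r // colorLt x (π.1 x)}

/-- `exc_A(π) = |{i ∈ [n-1] : π(i) > i}|` (positions are the color-0 letters,
and `i ∈ [n-1]` corresponds to `i.val + 1 < n`). -/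
noncomputable def cExcA {r n : ℕ} [NeZero r] (π : ColoredPerm r n) : ℕ :=
  Nat.card {i : Fin n // i.val + 1 < n ∧ colorLt (i, 0) (π.1 (i, 0))}

/-- `csum(π)`: the sum of the colors appearing in the window notation of `π`. -/
def csum {r n : ℕ} [NeZero r] (π : ColoredPerm r n) : ℕ :=
  ∑ i : Fin n, (π.1 (i, 0)).2.val

/-- `d(r,n,k)`: the number of colored permutations `π ∈ G_{r,n}` with `exc_A(π) = k`. -/
noncomputable def dG (r n : ℕ) [NeZero r] (k : ℕ) : ℕ :=
  Nat.card {π : ColoredPerm r n // cExcA π = k}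

/-- The generating polynomial `D_{r,n}(t) = Σ_{k=0}^{n} d(r,n,k) t^k` of `exc_A` over `G_{r,n}`. -/
noncomputable def Dpoly (r n : ℕ) [NeZero r] : Polynomial ℚ :=
  ∑ k ∈ Finset.range (n + 1), Polynomial.C ((dG r n k : ℚ)) * Polynomial.X ^ k

/-- The Stirling numbers of the second kind, via `S(n+1,j) = j·S(n,j) + S(n,j−1)`. -/
def stirling2 : ℕ → ℕ → ℕ
  | 0, 0 => 1
  | 0, _ + 1 => 0
  | _ + 1, 0 => 0
  | n + 1, j + 1 => (j + 1) * stirling2 n (j + 1) + stirling2 n j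

def excN {n : ℕ} (σ : Equiv.Perm (Fin n)) : ℕ :=
  (Finset.univ.filter (fun i => i < σ i)).card

lemma excN_le {n : ℕ} (σ : Equiv.Perm (Fin n)) : excN σ ≤ n := by
  classical
  calc excN σ ≤ (Finset.univ : Finset (Fin n)).card := Finset.card_filter_le _ _
  _ = n := by simp

lemma excN_decompose_zero {n : ℕ} (σ : Equiv.Perm (Fin n)) :
    excN (Equiv.Perm.decomposeFin.symm (0, σ)) = excN σ := by
  classical
  unfold excN
  rw [Fin.card_filter_univ_succ']
  simp [Equiv.Perm.decomposeFin_symm_apply_zero, Equiv.Perm.decomposeFin_symm_apply_succ,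
    Fin.succ_lt_succ_iff]

lemma excN_decompose_succ {n : ℕ} (σ : Equiv.Perm (Fin n)) (q : Fin n) :
    excN (Equiv.Perm.decomposeFin.symm (q.succ, σ)) =
      if σ⁻¹ q < q then excN σ else excN σ + 1 := by
  classical
  unfold excN
  rw [Fin.card_filter_univ_succ']
  have h0 : (0 : Fin (n+1)) < Equiv.Perm.decomposeFin.symm (q.succ, σ) 0 := by
    rw [Equiv.Perm.decomposeFin_symm_apply_zero]; exact Fin.succ_pos q
  rw [if_pos h0]
  have hsucc : ∀ x : Fin n,
      (x.succ < Equiv.Perm.decomposeFin.symm (q.succ, σ) x.succ) ↔ (σ x ≠ q ∧ x < σ x) := by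
    intro x
    rw [Equiv.Perm.decomposeFin_symm_apply_succ]
    by_cases h : σ x = q
    · subst h
      simp [Equiv.swap_apply_right]
    · rw [Equiv.swap_apply_of_ne_of_ne (Fin.succ_ne_zero _) (by simpa [Fin.succ_inj] using h)]
      simp [Fin.succ_lt_succ_iff, h]
  have hfe : univ.filter (fun x => x.succ < Equiv.Perm.decomposeFin.symm (q.succ, σ) x.succ)
      = (univ.filter (fun x => x < σ x)).erase (σ⁻¹ q) := by
    ext x
    simp only [Finset.mem_filter, Finset.mem_univ, true_and, Finset.mem_erase, hsucc]
    constructor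
    · rintro ⟨h1, h2⟩
      exact ⟨fun hx => h1 (by rw [hx]; simp), h2⟩
    · rintro ⟨h1, h2⟩
      exact ⟨fun hx => h1 (by rw [← hx]; simp), h2⟩
  rw [hfe]
  by_cases h : σ⁻¹ q < q
  · rw [if_pos h]
    have hmem : σ⁻¹ q ∈ univ.filter (fun x => x < σ x) := by
      simp only [Finset.mem_filter, Finset.mem_univ, true_and]
      simpa using h
    rw [Finset.card_erase_of_mem hmem]
    have : 1 ≤ excN σ := Finset.card_pos.mpr ⟨_, hmem⟩
    unfold excN at *
    omega
  · rw [if_neg h]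
    rw [Finset.erase_eq_of_notMem (by simp only [Finset.mem_filter, Finset.mem_univ, true_and]; simpa using h)]
    exact Nat.add_comm 1 _

lemma card_inv_lt {n : ℕ} (σ : Equiv.Perm (Fin n)) :
    (univ.filter (fun q : Fin n => σ⁻¹ q < q)).card = excN σ := by
  classical
  unfold excN
  apply Finset.card_bij (fun q _ => σ⁻¹ q)
  · intro q hq
    simp only [Finset.mem_filter, Finset.mem_univ, true_and] at *
    simpa using hq
  · intro a ha b hb hab
    exact σ⁻¹.injective hab
  · intro b hb
    refine ⟨σ b, by simp only [Finset.mem_filter, Finset.mem_univ, true_and] at *; simpa using hb, by simp⟩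

noncomputable def Epoly (n : ℕ) : Polynomial ℚ :=
  ∑ σ : Equiv.Perm (Fin n), X ^ excN σ

lemma Epoly_succ (n : ℕ) :
    Epoly (n + 1) = (1 + C (n : ℚ) * X) * Epoly n + X * (1 - X) * derivative (Epoly n) := by
  classical
  unfold Epoly
  rw [derivative_sum]
  simp only [derivative_X_pow]
  rw [Finset.mul_sum, Finset.mul_sum, ← Finset.sum_add_distrib]
  rw [← Equiv.sum_comp (Equiv.Perm.decomposeFin (n := n)).symm
        (fun τ => (X : Polynomial ℚ) ^ excN τ)]
  rw [Fintype.sum_prod_type_right]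
  apply Finset.sum_congr rfl
  intro σ _
  rw [Fin.sum_univ_succ]
  rw [excN_decompose_zero]
  have : ∀ q : Fin n, (X : Polynomial ℚ) ^ excN (Equiv.Perm.decomposeFin.symm (q.succ, σ))
      = if σ⁻¹ q < q then X ^ excN σ else X ^ (excN σ + 1) := by
    intro q; rw [excN_decompose_succ]; split_ifs <;> rfl
  rw [Finset.sum_congr rfl (fun q _ => this q)]
  rw [Finset.sum_ite (fun _ => X ^ excN σ) (fun _ => X ^ (excN σ + 1))]
  rw [Finset.sum_const, Finset.sum_const]
  rw [card_inv_lt]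
  have hneg : (univ.filter (fun x : Fin n => ¬ σ⁻¹ x < x)).card = n - excN σ := by
    have := Finset.card_filter_add_card_filter_not (s := (univ : Finset (Fin n)))
      (p := fun x : Fin n => σ⁻¹ x < x)
    rw [card_inv_lt σ] at this
    simp only [Finset.card_univ, Fintype.card_fin] at this
    omega
  rw [hneg]
  have hk := excN_le σ
  set k := excN σ with hkdef
  rw [nsmul_eq_mul, nsmul_eq_mul]
  simp only [Polynomial.C_eq_natCast]
  push_cast [Nat.cast_sub hk]
  cases k with
  | zero => ring
  | succ m =>
    have h1 : (X : Polynomial ℚ) ^ (m + 1 + 1) = X ^ (m+1) * X := by ring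
    have h2 : (X : Polynomial ℚ) ^ (m + 1) = X ^ m * X := by ring
    simp only [Nat.add_sub_cancel, Nat.cast_add, Nat.cast_one, h1, h2]
    ring

lemma stirling2_of_lt : ∀ {n j : ℕ}, n < j → stirling2 n j = 0 := by
  intro n
  induction n with
  | zero => intro j hj; cases j with | zero => omega | succ m => rfl
  | succ m ih =>
    intro j hj
    cases j with
    | zero => omega
    | succ k =>
      show (k+1) * stirling2 m (k+1) + stirling2 m k = 0
      rw [ih (by omega), ih (by omega)]
      simp

lemma aux_pow (p : Polynomial ℚ) (a : ℕ) : p * (C (a:ℚ) * p^(a-1)) = C (a:ℚ) * p^a := by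
  cases a with
  | zero => simp
  | succ m => simp only [Nat.add_sub_cancel, pow_succ]; ring

lemma term_id (a d : ℕ) :
    (1 + C ((a+1+d : ℕ):ℚ) * X) * ((X:Polynomial ℚ)^a * (1-X)^d)
      + X*(1-X) * derivative ((X:Polynomial ℚ)^a * (1-X)^d)
    = C ((a+1:ℕ):ℚ) * (X^a * (1-X)^(d+1)) + C ((a+2:ℕ):ℚ) * (X^(a+1) * (1-X)^d) := by
  have hd : derivative ((X:Polynomial ℚ)^a * (1-X)^d)
      = C (a:ℚ) * X^(a-1) * (1-X)^d - X^a * (C (d:ℚ) * (1-X)^(d-1)) := by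
    rw [derivative_mul, derivative_X_pow, derivative_pow]
    simp only [derivative_sub, derivative_one, derivative_X, zero_sub, mul_neg, mul_one]
    ring
  have h1 : (X*(1-X) : Polynomial ℚ) * (C (a:ℚ) * X^(a-1) * (1-X)^d)
      = C (a:ℚ) * X^a * (1-X)^(d+1) := by
    have : (X*(1-X) : Polynomial ℚ) * (C (a:ℚ) * X^(a-1) * (1-X)^d)
        = (X * (C (a:ℚ) * X^(a-1))) * (1-X)^(d+1) := by rw [pow_succ]; ring
    rw [this, aux_pow]
  have h2 : (X*(1-X):Polynomial ℚ) * (X^a * (C (d:ℚ) * (1-X)^(d-1)))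
      = C (d:ℚ) * X^(a+1) * (1-X)^d := by
    have : (X*(1-X):Polynomial ℚ) * (X^a * (C (d:ℚ) * (1-X)^(d-1)))
        = ((1-X) * (C (d:ℚ) * (1-X)^(d-1))) * X^(a+1) := by rw [pow_succ]; ring
    rw [this, aux_pow]; ring
  rw [hd, mul_sub, h1, h2]
  simp only [Polynomial.C_eq_natCast]
  push_cast
  ring

noncomputable def Fpoly (n : ℕ) : Polynomial ℚ :=
  ∑ j ∈ Icc 1 n, C ((j.factorial * stirling2 n j : ℕ) : ℚ) * X ^ (j - 1) * (1 - X) ^ (n - j)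

lemma Icc_sum_eq {M : Type*} [AddCommMonoid M] (f : ℕ → M) (m : ℕ) :
    ∑ j ∈ Icc 1 m, f j = ∑ i ∈ range m, f (i+1) := by
  induction m with
  | zero => simp
  | succ k ih => rw [Finset.sum_Icc_succ_top (Nat.one_le_iff_ne_zero.mpr (Nat.succ_ne_zero k)), ih, Finset.sum_range_succ]

lemma Fpoly_succ (n : ℕ) (hn : 1 ≤ n) :
    Fpoly (n+1) = (1 + C (n:ℚ) * X) * Fpoly n + X * (1-X) * derivative (Fpoly n) := by
  unfold Fpoly
  rw [derivative_sum, Finset.mul_sum, Finset.mul_sum, ← Finset.sum_add_distrib]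
  rw [Icc_sum_eq, Icc_sum_eq]
  -- termwise rewrite of RHS summand using term_id
  have hterm : ∀ i ∈ range n,
      (1 + C (n:ℚ) * X) * (C (((i+1).factorial * stirling2 n (i+1) : ℕ) : ℚ) * X ^ (i+1-1) * (1-X) ^ (n-(i+1)))
        + X * (1-X) * derivative (C (((i+1).factorial * stirling2 n (i+1) : ℕ) : ℚ) * X ^ (i+1-1) * (1-X) ^ (n-(i+1)))
      = C (((i+1).factorial * stirling2 n (i+1) * (i+1) : ℕ) : ℚ) * (X^i * (1-X)^(n-i))
        + C (((i+1).factorial * stirling2 n (i+1) * (i+2) : ℕ) : ℚ) * (X^(i+1) * (1-X)^(n-(i+1))) := by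
    intro i hi
    rw [Finset.mem_range] at hi
    have hd : n - (i+1) = n - 1 - i := by omega
    have hn1 : n = i + 1 + (n-1-i) := by omega
    have hni : n - i = (n-1-i) + 1 := by omega
    rw [Nat.add_sub_cancel, mul_assoc, derivative_C_mul]
    have hre : (1 + C (n:ℚ) * X) * (C (((i+1).factorial * stirling2 n (i+1) : ℕ) : ℚ) * (X ^ i * (1-X) ^ (n-(i+1))))
        + X * (1-X) * (C (((i+1).factorial * stirling2 n (i+1) : ℕ) : ℚ) * derivative ((X:Polynomial ℚ) ^ i * (1-X) ^ (n-(i+1))))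
        = C (((i+1).factorial * stirling2 n (i+1) : ℕ) : ℚ) *
            ((1 + C (n:ℚ) * X) * ((X:Polynomial ℚ) ^ i * (1-X) ^ (n-(i+1)))
              + X * (1-X) * derivative ((X:Polynomial ℚ) ^ i * (1-X) ^ (n-(i+1)))) := by ring
    rw [hre, hd, hni]
    set d := n - 1 - i with hdd
    have hn2 : C (n:ℚ) = C ((i+1+d:ℕ):ℚ) := by rw [← hn1]
    rw [hn2, term_id (a := i) (d := d)]
    simp only [Polynomial.C_eq_natCast]
    push_cast
    ring
  rw [Finset.sum_congr rfl hterm, Finset.sum_add_distrib]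
  -- LHS decomposition
  have hL : ∀ i, C ((((i+1)).factorial * stirling2 (n+1) (i+1) : ℕ) : ℚ) * X ^ (i+1-1) * (1-X) ^ (n+1-(i+1))
      = C (((i+1).factorial * stirling2 n (i+1) * (i+1) : ℕ) : ℚ) * (X^i * (1-X)^(n-i))
        + C (((i+1).factorial * stirling2 n i : ℕ) : ℚ) * (X^i * (1-X)^(n-i)) := by
    intro i
    have h1 : stirling2 (n+1) (i+1) = (i+1) * stirling2 n (i+1) + stirling2 n i := rfl
    rw [Nat.add_sub_cancel, h1]
    have h2 : n + 1 - (i+1) = n - i := by omega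
    rw [h2]
    simp only [Polynomial.C_eq_natCast]
    push_cast
    ring
  rw [Finset.sum_congr rfl (fun i _ => hL i), Finset.sum_add_distrib]
  congr 1
  · -- first sums: range (n+1) vs range n, top term vanishes
    rw [Finset.sum_range_succ, stirling2_of_lt (Nat.lt_succ_self n)]
    simp
  · -- second: shift index
    rw [Finset.sum_range_succ']
    have h0 : stirling2 n 0 = 0 := by
      cases n with | zero => omega | succ m => rfl
    rw [h0]
    simp only [Nat.mul_zero, Nat.cast_zero, map_zero, zero_mul, add_zero]
    apply Finset.sum_congr rfl
    intro i hi
    have : (i+1+1).factorial = (i+1).factorial * (i+2) := by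
      rw [Nat.factorial_succ]; ring
    rw [this]
    simp only [Polynomial.C_eq_natCast]
    push_cast
    ring

lemma app_color {r n : ℕ} [NeZero r] (π : Equiv.Perm (Fin n × Fin r))
    (hπ : ∀ x : Fin n × Fin r, π (x.1, x.2 + 1) = ((π x).1, (π x).2 + 1))
    (i : Fin n) (c : Fin r) :
    π (i, c) = ((π (i, 0)).1, (π (i, 0)).2 + c) := by
  suffices h : ∀ v (hv : v < r), π (i, ⟨v, hv⟩) = ((π (i, 0)).1, (π (i, 0)).2 + ⟨v, hv⟩) by
    obtain ⟨v, hv⟩ := c; exact h v hv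
  intro v
  induction v with
  | zero =>
    intro hv
    have h0 : (⟨0, hv⟩ : Fin r) = 0 := by
      apply Fin.ext; simp
    rw [h0, add_zero]
  | succ w ih =>
    intro hv
    have hw : w < r := by omega
    have hr : 1 < r := by omega
    have hstep : (⟨w+1, hv⟩ : Fin r) = ⟨w, hw⟩ + 1 := by
      apply Fin.ext
      rw [Fin.add_def]
      simp only [Fin.val_one', Nat.mod_eq_of_lt hr]
      exact (Nat.mod_eq_of_lt hv).symm
    rw [hstep]
    have h2 := hπ (i, ⟨w, hw⟩)
    dsimp only at h2
    rw [h2, ih hw, add_assoc]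

theorem Equiv.Perm.apply_inv_self {α : Type*} (f : Equiv.Perm α) (x : α) : f (f⁻¹ x) = x :=
  f.apply_symm_apply x

theorem Equiv.Perm.inv_apply_self {α : Type*} (f : Equiv.Perm α) (x : α) : f⁻¹ (f x) = x :=
  f.symm_apply_apply x

lemma inv_comm {r n : ℕ} [NeZero r] (π : Equiv.Perm (Fin n × Fin r))
    (hπ : ∀ x : Fin n × Fin r, π (x.1, x.2 + 1) = ((π x).1, (π x).2 + 1)) :
    ∀ x : Fin n × Fin r, π⁻¹ (x.1, x.2 + 1) = ((π⁻¹ x).1, (π⁻¹ x).2 + 1) := by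
  intro x
  apply π.injective
  rw [Equiv.Perm.apply_inv_self]
  have := hπ (π⁻¹ x)
  rw [Equiv.Perm.apply_inv_self] at this
  rw [this]

/-- The wreath-product structure: colored permutations are pairs (permutation, coloring). -/
def colorEquiv (r n : ℕ) [NeZero r] :
    (Equiv.Perm (Fin n) × (Fin n → Fin r)) ≃ ColoredPerm r n where
  toFun p :=
    ⟨{ toFun := fun x => (p.1 x.1, p.2 x.1 + x.2)
       invFun := fun x => (p.1⁻¹ x.1, x.2 - p.2 (p.1⁻¹ x.1))
       left_inv := by
         intro x
         simp only [Equiv.Perm.inv_apply_self, add_sub_cancel_left, Prod.mk.eta]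
       right_inv := by
         intro x
         simp only [Equiv.Perm.apply_inv_self, add_sub_cancel, Prod.mk.eta] },
     by intro x; simp only [Equiv.coe_fn_mk, add_assoc]⟩
  invFun π :=
    (⟨fun i => (π.1 (i, 0)).1, fun i => (π.1⁻¹ (i, 0)).1,
      by
        intro i
        have h := app_color π.1 π.2 i 0
        rw [add_zero, Prod.mk.eta] at h
        have h2 := app_color π.1⁻¹ (inv_comm π.1 π.2) ((π.1 (i,0)).1) ((π.1 (i,0)).2)
        rw [← h, Equiv.Perm.inv_apply_self] at h2
        exact congrArg Prod.fst h2.symm,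
      by
        intro i
        have h := app_color π.1⁻¹ (inv_comm π.1 π.2) i 0
        rw [add_zero, Prod.mk.eta] at h
        have h2 := app_color π.1 π.2 ((π.1⁻¹ (i,0)).1) ((π.1⁻¹ (i,0)).2)
        rw [← h, Equiv.Perm.apply_inv_self] at h2
        exact congrArg Prod.fst h2.symm⟩,
     fun i => (π.1 (i, 0)).2)
  left_inv p := by
    apply Prod.ext
    · apply Equiv.ext; intro i; rfl
    · funext i
      show ((p.1 i, p.2 i + 0) : Fin n × Fin r).2 = p.2 i
      simp
  right_inv π := by
    apply Subtype.ext
    apply Equiv.ext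
    intro x
    show ((π.1 (x.1, 0)).1, (π.1 (x.1, 0)).2 + x.2) = π.1 x
    rw [← app_color π.1 π.2 x.1 x.2, Prod.mk.eta]

noncomputable instance (r n : ℕ) [NeZero r] : Fintype (ColoredPerm r n) :=
  Fintype.ofEquiv _ (colorEquiv r n)

lemma cExcA_colorEquiv {r n : ℕ} [NeZero r] (σ : Equiv.Perm (Fin n)) (c : Fin n → Fin r) :
    cExcA (colorEquiv r n (σ, c)) =
      (Finset.univ.filter (fun i => c i = 0 ∧ i < σ i)).card := by
  classical
  unfold cExcA
  rw [Nat.card_eq_fintype_card, Fintype.card_subtype]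
  congr 1
  apply Finset.filter_congr
  intro i _
  have happ : ((colorEquiv r n (σ, c)).1 (i, 0)) = (σ i, c i + 0) := rfl
  rw [happ]
  unfold colorLt
  simp only [add_zero]
  constructor
  · rintro ⟨-, h⟩
    rcases h with h | ⟨h1, h2⟩
    · exact absurd h (by simp)
    · exact ⟨h1.symm, h2⟩
  · rintro ⟨h1, h2⟩
    refine ⟨?_, Or.inr ⟨h1.symm, h2⟩⟩
    have : (i:ℕ) < (σ i : ℕ) := h2
    have hlt : ((σ i : ℕ)) < n := (σ i).isLt
    omega

lemma cExcA_le {r n : ℕ} [NeZero r] (π : ColoredPerm r n) : cExcA π ≤ n := by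
  classical
  unfold cExcA
  rw [Nat.card_eq_fintype_card]
  calc Fintype.card {i : Fin n // i.val + 1 < n ∧ colorLt (i, 0) (π.1 (i, 0))}
      ≤ Fintype.card (Fin n) := Fintype.card_subtype_le _
    _ = n := Fintype.card_fin n

lemma Dpoly_eq_sum_colored (r n : ℕ) [NeZero r] :
    Dpoly r n = ∑ π : ColoredPerm r n, X ^ cExcA π := by
  classical
  unfold Dpoly
  rw [← Finset.sum_fiberwise_of_maps_to (g := fun π : ColoredPerm r n => cExcA π)
      (fun π _ => Finset.mem_range.mpr (Nat.lt_succ_of_le (cExcA_le π)))]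
  apply Finset.sum_congr rfl
  intro k _
  rw [Finset.sum_congr rfl (fun π hπ => by
    rw [(Finset.mem_filter.mp hπ).2]), Finset.sum_const]
  have hcard : dG r n k = (Finset.univ.filter (fun π : ColoredPerm r n => cExcA π = k)).card := by
    unfold dG
    rw [Nat.card_eq_fintype_card, Fintype.card_subtype]
  rw [hcard]
  rw [nsmul_eq_mul]
  simp

lemma Dpoly_eq_perm_sum (r n : ℕ) [NeZero r] :
    Dpoly r n = ∑ σ : Equiv.Perm (Fin n),
      (X + C (r:ℚ) - 1) ^ excN σ * (C (r:ℚ)) ^ (n - excN σ) := by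
  classical
  rw [Dpoly_eq_sum_colored]
  rw [← Equiv.sum_comp (colorEquiv r n) (fun π => (X:Polynomial ℚ) ^ cExcA π)]
  rw [Fintype.sum_prod_type]
  apply Finset.sum_congr rfl
  intro σ _
  -- inner sum over colorings
  have hin : ∀ c : Fin n → Fin r,
      (X:Polynomial ℚ) ^ cExcA (colorEquiv r n (σ, c))
        = ∏ i : Fin n, (if c i = 0 ∧ i < σ i then (X:Polynomial ℚ) else 1) := by
    intro c
    rw [cExcA_colorEquiv, Finset.card_filter]
    rw [← Finset.prod_pow_eq_pow_sum]
    apply Finset.prod_congr rfl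
    intro i _
    split_ifs <;> simp
  rw [Finset.sum_congr rfl (fun c _ => hin c)]
  rw [← Fintype.piFinset_univ,
    ← Finset.prod_univ_sum (t := fun _ : Fin n => (Finset.univ : Finset (Fin r)))
      (f := fun i v => if v = 0 ∧ i < σ i then (X:Polynomial ℚ) else 1)]
  have hfac : ∀ i : Fin n,
      (∑ v : Fin r, if v = 0 ∧ i < σ i then (X:Polynomial ℚ) else 1)
        = if i < σ i then X + C (r:ℚ) - 1 else C (r:ℚ) := by
    intro i
    by_cases h : i < σ i
    · rw [if_pos h]
      have hv : ∀ v : Fin r, (if v = 0 ∧ i < σ i then (X:Polynomial ℚ) else 1)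
          = (if v = 0 then X - 1 else 0) + 1 := by
        intro v
        by_cases hv : v = 0 <;> simp [hv, h]
      rw [Finset.sum_congr rfl (fun v _ => hv v), Finset.sum_add_distrib,
        Finset.sum_ite_eq' Finset.univ (0 : Fin r) (fun _ => (X:Polynomial ℚ) - 1),
        Finset.sum_const]
      simp only [Finset.mem_univ, if_pos, Finset.card_univ, Fintype.card_fin,
        nsmul_eq_mul, mul_one, Polynomial.C_eq_natCast]
      ring
    · rw [if_neg h]
      rw [Finset.sum_congr rfl (fun v _ => by rw [if_neg (by tauto)]), Finset.sum_const]
      simp [Finset.card_univ]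
  rw [Finset.prod_congr rfl (fun i _ => hfac i)]
  rw [Finset.prod_ite (fun _ => X + C (r:ℚ) - 1) (fun _ => C (r:ℚ))]
  rw [Finset.prod_const, Finset.prod_const]
  have h1 : (Finset.univ.filter (fun i => i < σ i)).card = excN σ := rfl
  have h2 : (Finset.univ.filter (fun i => ¬ i < σ i)).card = n - excN σ := by
    have := Finset.card_filter_add_card_filter_not (s := (univ : Finset (Fin n)))
      (p := fun i : Fin n => i < σ i)
    rw [h1] at this
    simp only [Finset.card_univ, Fintype.card_fin] at this
    omega
  rw [h1, h2]

lemma Epoly_eq_Fpoly : ∀ n : ℕ, 1 ≤ n → Epoly n = Fpoly n := by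
  intro n
  induction n with
  | zero => omega
  | succ m ih =>
    intro _
    by_cases hm : m = 0
    · subst hm
      show Epoly 1 = Fpoly 1
      unfold Epoly Fpoly
      rw [Finset.univ_unique, Finset.sum_singleton]
      simp [excN, stirling2, Nat.factorial]
    · have hm1 : 1 ≤ m := Nat.one_le_iff_ne_zero.mpr hm
      rw [Epoly_succ, ih hm1, ← Fpoly_succ m hm1]

lemma pow_frac (rr x : ℚ) (hr : rr ≠ 0) (k m : ℕ) (hk : k ≤ m) :
    rr ^ m * (x / rr) ^ k = x ^ k * rr ^ (m - k) := by
  rw [div_pow]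
  rw [show rr ^ m = rr ^ (m - k) * rr ^ k by rw [← pow_add]; congr 1; omega]
  field_simp

/-- For all `n ≥ 1`,
`D_{r,n}(t) = r·Σ_{j=1}^{n} j!·S(n,j)·(t+r−1)^{j−1}·(1−t)^{n−j}`. -/
theorem Dpoly_closed_form (r n : ℕ) [NeZero r] (hn : 1 ≤ n) :
    Dpoly r n =
      Polynomial.C (r : ℚ) *
        ∑ j ∈ Finset.Icc 1 n,
          Polynomial.C ((j.factorial * stirling2 n j : ℕ) : ℚ) *
            (Polynomial.X + Polynomial.C (r : ℚ) - 1) ^ (j - 1) *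
            (1 - Polynomial.X) ^ (n - j) := by
  classical
  have hr : ((r:ℚ)) ≠ 0 := by
    have := NeZero.pos r
    positivity
  rw [Dpoly_eq_perm_sum]
  apply Polynomial.funext
  intro q
  simp only [eval_mul, eval_finset_sum, eval_pow, eval_add, eval_sub, eval_one, eval_X, eval_C]
  set a : ℚ := q + (r:ℚ) - 1 with ha
  have hE := congrArg (Polynomial.eval (a / (r:ℚ))) (Epoly_eq_Fpoly n hn)
  unfold Epoly Fpoly at hE
  simp only [eval_finset_sum, eval_pow, eval_mul, eval_sub, eval_one, eval_X, eval_C] at hE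
  have hone : 1 - a / (r:ℚ) = (1 - q) / (r:ℚ) := by
    field_simp
    ring
  rw [hone] at hE
  have hmul := congrArg (fun z => ((r:ℚ))^n * z) hE
  simp only [Finset.mul_sum] at hmul
  calc ∑ σ : Equiv.Perm (Fin n), a ^ excN σ * (r:ℚ) ^ (n - excN σ)
      = ∑ σ : Equiv.Perm (Fin n), (r:ℚ)^n * (a / (r:ℚ)) ^ excN σ := by
        apply Finset.sum_congr rfl
        intro σ _
        rw [pow_frac _ _ hr _ _ (excN_le σ)]
    _ = ∑ j ∈ Finset.Icc 1 n, (r:ℚ)^n *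
          (((j.factorial * stirling2 n j : ℕ) : ℚ) * (a / (r:ℚ)) ^ (j-1) * ((1-q) / (r:ℚ)) ^ (n-j)) := hmul
    _ = (r:ℚ) * ∑ j ∈ Finset.Icc 1 n,
          ((j.factorial * stirling2 n j : ℕ) : ℚ) * a ^ (j-1) * (1-q) ^ (n-j) := by
        rw [Finset.mul_sum]
        apply Finset.sum_congr rfl
        intro j hj
        rw [Finset.mem_Icc] at hj
        have hsplit : (r:ℚ)^n = (r:ℚ) * ((r:ℚ)^(j-1) * (r:ℚ)^(n-j)) := by
          rw [← pow_add, ← pow_succ']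
          congr 1
          omega
        rw [hsplit, div_pow, div_pow]
        field_simp
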